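/- arXiv:1502.01530 — 3 statements merged into one kernel-verified Lean document; each statement's English description precedes it below -/
import Mathlib

section
/- Let Φ be a Schur idempotent on B(H). Then ran Φ is hyperreflexive if and only if Φ ∈ 𝔉H; moreover, in that case k(ran Φ) ≤ λ(Φ) and λ(Φ) ≤ k(ran Φ)·‖id − Φ‖. -/
open scoped InnerProductSpace Pointwise

noncomputable section

namespace SchurHyper

/-- `B H` is the algebra of bounded linear operators on `H`. -/
abbrev B (H : Type*) [NormedAddCommGroup H] [InnerProductSpace ℂ H] : Type _ := H →L[ℂ] H

variable (H : Type*) [NormedAddCommGroup H] [InnerProductSpace ℂ H]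

/-- A linear functional on `B H` is *normal* (weak* continuous) if it arises from
the duality with the trace class, i.e. it is of the form
`T ↦ ∑ₙ ⟪yₙ, T xₙ⟫` for square-summable sequences `(xₙ)`, `(yₙ)`
(recall that the inner product is conjugate-linear in its first slot). -/
def IsNormalFunctional (ω : B H →ₗ[ℂ] ℂ) : Prop :=
  ∃ x y : ℕ → H, Summable (fun n => ‖x n‖ ^ 2) ∧ Summable (fun n => ‖y n‖ ^ 2) ∧
    ∀ T : B H, ω T = ∑' n, ⟪y n, T (x n)⟫_ℂ

/-- The weak* topology on `B H`: the topology induced by the normal functionals. -/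
def weakStarTopology : TopologicalSpace (B H) :=
  TopologicalSpace.induced
    (fun (T : B H) (ω : {ω : B H →ₗ[ℂ] ℂ // IsNormalFunctional H ω}) => ω.1 T)
    inferInstance

/-- A set of operators is weak* closed if it is closed in the weak* topology. -/
def WStarClosed (X : Set (B H)) : Prop := @IsClosed _ (weakStarTopology H) X

/-- The weak* closure of a set of operators. -/
def wStarClosure (X : Set (B H)) : Set (B H) := @closure _ (weakStarTopology H) X

/-- A map on `B H` is weak* continuous if it is continuous with respect to the
weak* topology on both sides. -/
def WStarContinuous (Φ : B H →L[ℂ] B H) : Prop :=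
  @Continuous _ _ (weakStarTopology H) (weakStarTopology H) Φ

variable {H}
variable [CompleteSpace H]

/-- A maximal abelian selfadjoint subalgebra of `B H`: an abelian selfadjoint
subalgebra which contains every operator commuting with it (equivalently, it
coincides with its own commutant). -/
def IsMasa (D : StarSubalgebra ℂ (B H)) : Prop :=
  (∀ A ∈ D, ∀ C ∈ D, A * C = C * A) ∧
  (∀ T : B H, (∀ A ∈ D, T * A = A * T) → T ∈ D)

/-- A Schur multiplier: a weak* continuous `D`-bimodule map on `B H`. -/
def IsSchurMultiplier (D : StarSubalgebra ℂ (B H)) (Φ : B H →L[ℂ] B H) : Prop :=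
  WStarContinuous H Φ ∧ ∀ A ∈ D, ∀ C ∈ D, ∀ T : B H, Φ (A * T * C) = A * Φ T * C

/-- A Schur idempotent: an idempotent Schur multiplier. -/
def IsSchurIdempotent (D : StarSubalgebra ℂ (B H)) (Φ : B H →L[ℂ] B H) : Prop :=
  IsSchurMultiplier D Φ ∧ Φ.comp Φ = Φ

/-- A subspace `X ⊆ B H` is a `D`-bimodule if `D X D ⊆ X`. -/
def IsBimodule (D : StarSubalgebra ℂ (B H)) (X : Submodule ℂ (B H)) : Prop :=
  ∀ A ∈ D, ∀ C ∈ D, ∀ T ∈ X, A * T * C ∈ X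

/-- The Arveson distance `α(T, X)`. -/
def arveson (T : B H) (X : Set (B H)) : ℝ :=
  ⨆ ξ : {ξ : H // ‖ξ‖ = 1}, ⨅ S : X, ‖T ξ.1 - S.1 ξ.1‖

/-- The set of hyperreflexivity constants of `X`. -/
def hyperSet (X : Set (B H)) : Set ℝ :=
  {k | 0 < k ∧ ∀ T : B H, Metric.infDist T X ≤ k * arveson T X}

/-- A subspace is hyperreflexive if `d(T, X) ≤ k ⬝ α(T, X)` for some `k > 0`. -/
def Hyperreflexive (X : Set (B H)) : Prop := (hyperSet X).Nonempty

/-- The hyperreflexivity constant `k(X)`: the least constant that works. -/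
def hyperConst (X : Set (B H)) : ℝ := sInf (hyperSet X)

/-- The set of constants `λ` witnessing that a Schur idempotent lies in `𝔉H`. -/
def lamSet (Φ : B H →L[ℂ] B H) : Set ℝ :=
  {l | 0 < l ∧ ∀ T : B H, ‖T - Φ T‖ ≤ l * arveson T (Set.range Φ)}

/-- The class `𝔉H` of Schur idempotents `Φ` such that
`‖T - Φ T‖ ≤ λ ⬝ α(T, ran Φ)` for some `λ > 0` and all `T`. -/
def MemFH (D : StarSubalgebra ℂ (B H)) (Φ : B H →L[ℂ] B H) : Prop :=
  IsSchurIdempotent D Φ ∧ (lamSet Φ).Nonempty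

/-- The constant `λ(Φ)`: the least constant witnessing membership of `𝔉H`. -/
def lam (Φ : B H →L[ℂ] B H) : ℝ := sInf (lamSet Φ)

/-- A ternary masa-bimodule condition: `S T* R ∈ M` whenever `S, T, R ∈ M`. -/
def IsTernary (M : Submodule ℂ (B H)) : Prop :=
  ∀ S ∈ M, ∀ T ∈ M, ∀ R ∈ M, S * star T * R ∈ M

end SchurHyper

open SchurHyper

section Aux

variable {H : Type*} [NormedAddCommGroup H] [InnerProductSpace ℂ H] [CompleteSpace H]

lemma arveson_nonneg' (T : B H) (X : Set (B H)) : 0 ≤ arveson T X :=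
  Real.iSup_nonneg fun _ => Real.iInf_nonneg fun _ => norm_nonneg _

lemma le_infDist' {T : B H} {X : Set (B H)} (hX : X.Nonempty) {b : ℝ}
    (h : ∀ y ∈ X, b ≤ dist T y) : b ≤ Metric.infDist T X := by
  by_contra hlt
  rcases (Metric.infDist_lt_iff hX).mp (not_le.mp hlt) with ⟨y, hy, hdy⟩
  exact absurd (h y hy) (not_le.mpr hdy)

/-- Core estimate: `‖T - Φ T‖ ≤ ‖id - Φ‖ · d(T, ran Φ)` for an idempotent `Φ`. -/
lemma norm_sub_le_opNorm_mul_infDist (Φ : B H →L[ℂ] B H)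
    (hid : ∀ T : B H, Φ (Φ T) = Φ T) (T : B H) :
    ‖T - Φ T‖ ≤ ‖ContinuousLinearMap.id ℂ (B H) - Φ‖ * Metric.infDist T (Set.range ⇑Φ) := by
  set c : ℝ := ‖ContinuousLinearMap.id ℂ (B H) - Φ‖ with hc
  have hpt : ∀ y ∈ Set.range ⇑Φ, ‖T - Φ T‖ ≤ c * dist T y := by
    rintro _ ⟨U, rfl⟩
    have hrw : T - Φ T = (ContinuousLinearMap.id ℂ (B H) - Φ) (T - Φ U) := by
      simp only [ContinuousLinearMap.sub_apply, ContinuousLinearMap.id_apply, map_sub, hid U]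
      abel
    rw [hrw, dist_eq_norm]
    exact (ContinuousLinearMap.id ℂ (B H) - Φ).le_opNorm _
  have hne : (Set.range ⇑Φ).Nonempty := ⟨Φ T, T, rfl⟩
  rcases (norm_nonneg _ : (0:ℝ) ≤ c).eq_or_lt with h0 | h0
  · have h0' : c = 0 := hc.trans h0.symm
    have := hpt (Φ T) ⟨T, rfl⟩
    rw [h0'] at this ⊢
    simpa using this
  · rw [mul_comm, ← div_le_iff₀ h0]
    refine le_infDist' hne fun y hy => ?_
    rw [div_le_iff₀ h0, mul_comm]
    exact hpt y hy

/-- If `X` is hyperreflexive then `d(T, X) ≤ k(X) · α(T, X)`. -/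
lemma infDist_le_hyperConst_mul (X : Set (B H)) (hX : Hyperreflexive X) (T : B H) :
    Metric.infDist T X ≤ hyperConst X * arveson T X := by
  obtain ⟨k, hk0, hk⟩ := hX
  have hα : 0 ≤ arveson T X := arveson_nonneg' T X
  rcases hα.eq_or_lt with hα0 | hα0
  · have := hk T
    rw [← hα0] at this ⊢
    simpa using this
  · rw [← div_le_iff₀ hα0]
    refine le_csInf ⟨k, hk0, hk⟩ ?_
    rintro l ⟨hl0, hl⟩
    rw [div_le_iff₀ hα0]
    exact hl T

lemma hyperConst_nonneg (X : Set (B H)) (hX : Hyperreflexive X) : 0 ≤ hyperConst X :=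
  le_csInf hX fun _ h => h.1.le

end Aux

/-- for a Schur idempotent `Φ`, `ran Φ` is hyperreflexive iff
`Φ ∈ 𝔉H`; in that case `k(ran Φ) ≤ λ(Φ)` and `λ(Φ) ≤ k(ran Φ)·‖id − Φ‖`. -/
theorem stmt2 {H : Type*} [NormedAddCommGroup H] [InnerProductSpace ℂ H] [CompleteSpace H]
    [TopologicalSpace.SeparableSpace H]
    (D : StarSubalgebra ℂ (B H)) (hD : IsMasa D)
    (Φ : B H →L[ℂ] B H) (hΦ : IsSchurIdempotent D Φ) :
    (Hyperreflexive (Set.range ⇑Φ) ↔ MemFH D Φ) ∧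
    (Hyperreflexive (Set.range ⇑Φ) →
      hyperConst (Set.range ⇑Φ) ≤ lam Φ ∧
      lam Φ ≤ hyperConst (Set.range ⇑Φ) * ‖ContinuousLinearMap.id ℂ (B H) - Φ‖) := by
  set c : ℝ := ‖ContinuousLinearMap.id ℂ (B H) - Φ‖ with hc
  have hid : ∀ T : B H, Φ (Φ T) = Φ T := fun T => by
    have := DFunLike.congr_fun hΦ.2 T
    simpa using this
  set X : Set (B H) := Set.range ⇑Φ with hX
  -- `lamSet Φ ⊆ hyperSet X`
  have hsub : lamSet Φ ⊆ hyperSet X := by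
    rintro l ⟨hl0, hl⟩
    refine ⟨hl0, fun T => ?_⟩
    exact le_trans (Metric.infDist_le_dist_of_mem ⟨T, rfl⟩)
      (by simpa [dist_eq_norm] using hl T)
  -- Hyperreflexive → MemFH
  have h1 : Hyperreflexive X → MemFH D Φ := by
    rintro ⟨k, hk0, hk⟩
    refine ⟨hΦ, ⟨k * (c + 1), by positivity, fun T => ?_⟩⟩
    have h2 := norm_sub_le_opNorm_mul_infDist Φ hid T
    have h3 : Metric.infDist T X ≤ k * arveson T X := hk T
    have hα : 0 ≤ arveson T X := arveson_nonneg' T X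
    calc ‖T - Φ T‖ ≤ c * Metric.infDist T X := h2
      _ ≤ c * (k * arveson T X) := by
          exact mul_le_mul_of_nonneg_left h3 (norm_nonneg _)
      _ ≤ k * (c + 1) * arveson T X := by nlinarith [mul_nonneg hk0.le hα]
  have h2 : MemFH D Φ → Hyperreflexive X := fun h => h.2.imp fun l hl => hsub hl
  refine ⟨⟨h1, h2⟩, fun hH => ?_⟩
  have hne : (lamSet Φ).Nonempty := (h1 hH).2
  constructor
  · exact csInf_le_csInf ⟨0, fun k hk => hk.1.le⟩ hne hsub
  · -- `lam Φ ≤ hyperConst X * c`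
    have hk0 : 0 ≤ hyperConst X := hyperConst_nonneg X hH
    refine le_of_forall_pos_le_add fun ε hε => ?_
    refine csInf_le ⟨0, fun l hl => hl.1.le⟩ ⟨by positivity, fun T => ?_⟩
    have hα : 0 ≤ arveson T X := arveson_nonneg' T X
    calc ‖T - Φ T‖ ≤ c * Metric.infDist T X := norm_sub_le_opNorm_mul_infDist Φ hid T
      _ ≤ c * (hyperConst X * arveson T X) :=
          mul_le_mul_of_nonneg_left (infDist_le_hyperConst_mul X hH T) (norm_nonneg _)
      _ ≤ (hyperConst X * c + ε) * arveson T X := by nlinarith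
end
end

section
/- Let U_n ⊆ B(H), n ∈ ℕ, be weak* closed hyperreflexive subspaces with U_{n+1} ⊆ U_n for all n and sup_n k(U_n) < ∞. Then U = ⋂_n U_n is hyperreflexive and k(U) ≤ limsup_n k(U_n). -/
open scoped InnerProductSpace Pointwise

noncomputable section

open SchurHyper

namespace Stmt11Aux

open SchurHyper Filter Topology

variable {H : Type*} [NormedAddCommGroup H] [InnerProductSpace ℂ H]

/-- The index type of normal functionals. -/
abbrev Om (H : Type*) [NormedAddCommGroup H] [InnerProductSpace ℂ H] : Type _ :=
  {ω : B H →ₗ[ℂ] ℂ // IsNormalFunctional H ω}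

/-- The vector functional `T ↦ ⟪y, T x⟫`. -/
def vf (x y : H) : B H →ₗ[ℂ] ℂ where
  toFun T := ⟪y, T x⟫_ℂ
  map_add' T S := by simp [inner_add_right]
  map_smul' c T := by simp [inner_smul_right]

lemma vf_normal (x y : H) : IsNormalFunctional H (vf x y) := by
  refine ⟨fun n => if n = 0 then x else 0, fun n => if n = 0 then y else 0, ?_, ?_, fun T => ?_⟩
  · refine summable_of_ne_finset_zero (s := {0}) fun n hn => ?_
    simp only [Finset.mem_singleton] at hn
    simp [hn]
  · refine summable_of_ne_finset_zero (s := {0}) fun n hn => ?_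
    simp only [Finset.mem_singleton] at hn
    simp [hn]
  · rw [tsum_eq_single 0 (fun n hn => by simp [hn])]
    simp [vf]

/-- `vf` as an element of `Om H`. -/
def vfO (x y : H) : Om H := ⟨vf x y, vf_normal x y⟩

/-- The evaluation map realizing the weak* topology. -/
def Fm : B H → (Om H → ℂ) := fun T ω => ω.1 T

lemma F_inducing : @IsInducing _ _ (weakStarTopology H) _ (Fm (H := H)) :=
  @IsInducing.mk _ _ (weakStarTopology H) _ _ rfl

lemma F_inj : Function.Injective (Fm (H := H)) := by
  intro T S h
  ext x
  refine ext_inner_left ℂ fun y => ?_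
  have := congrFun h (vfO x y)
  simpa [Fm, vfO, vf] using this

lemma summable_mul_norm {x y : ℕ → H} (hx : Summable fun n => ‖x n‖ ^ 2)
    (hy : Summable fun n => ‖y n‖ ^ 2) : Summable fun n => ‖x n‖ * ‖y n‖ := by
  refine Summable.of_nonneg_of_le (fun n => by positivity) (fun n => ?_)
    ((hx.add hy).div_const 2)
  have := sq_nonneg (‖x n‖ - ‖y n‖)
  nlinarith

lemma summable_inner (T : B H) {x y : ℕ → H} (hx : Summable fun n => ‖x n‖ ^ 2)
    (hy : Summable fun n => ‖y n‖ ^ 2) : Summable fun n => ⟪y n, T (x n)⟫_ℂ := by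
  apply Summable.of_norm
  refine Summable.of_nonneg_of_le (fun n => norm_nonneg _) (fun n => ?_)
    ((summable_mul_norm hx hy).mul_right ‖T‖)
  calc ‖⟪y n, T (x n)⟫_ℂ‖ ≤ ‖y n‖ * ‖T (x n)‖ := norm_inner_le_norm _ _
    _ ≤ ‖y n‖ * (‖T‖ * ‖x n‖) := by gcongr; exact T.le_opNorm _
    _ = ‖x n‖ * ‖y n‖ * ‖T‖ := by ring

set_option maxHeartbeats 1000000 in
lemma tail_bound {ω : B H →ₗ[ℂ] ℂ} (T : B H) {x y : ℕ → H}
    (hx : Summable fun n => ‖x n‖ ^ 2) (hy : Summable fun n => ‖y n‖ ^ 2)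
    (hrep : ∀ S : B H, ω S = ∑' n, ⟪y n, S (x n)⟫_ℂ) (N : ℕ) :
    ‖ω T - ∑ n ∈ Finset.range N, ⟪y n, T (x n)⟫_ℂ‖
      ≤ ‖T‖ * ∑' k, ‖x (k + N)‖ * ‖y (k + N)‖ := by
  have hsum := summable_inner T hx hy
  have hsplit := Summable.sum_add_tsum_nat_add (f := fun n => ⟪y n, T (x n)⟫_ℂ) N hsum
  rw [hrep T, ← hsplit, add_sub_cancel_left]
  have hx' : Summable fun n => ‖x (n + N)‖ ^ 2 := (summable_nat_add_iff N).2 hx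
  have hy' : Summable fun n => ‖y (n + N)‖ ^ 2 := (summable_nat_add_iff N).2 hy
  have hsum' : Summable fun k => ⟪y (k + N), T (x (k + N))⟫_ℂ := summable_inner T hx' hy'
  calc ‖∑' k, ⟪y (k + N), T (x (k + N))⟫_ℂ‖
      ≤ ∑' k, ‖⟪y (k + N), T (x (k + N))⟫_ℂ‖ := norm_tsum_le_tsum_norm hsum'.norm
    _ ≤ ∑' k, ‖x (k + N)‖ * ‖y (k + N)‖ * ‖T‖ := by
        refine hsum'.norm.tsum_le_tsum (fun k => ?_)
          ((summable_mul_norm hx' hy').mul_right ‖T‖)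
        calc ‖⟪y (k + N), T (x (k + N))⟫_ℂ‖ ≤ ‖y (k + N)‖ * ‖T (x (k + N))‖ :=
              norm_inner_le_norm _ _
          _ ≤ ‖y (k + N)‖ * (‖T‖ * ‖x (k + N)‖) := by gcongr; exact T.le_opNorm _
          _ = ‖x (k + N)‖ * ‖y (k + N)‖ * ‖T‖ := by ring
    _ = ‖T‖ * ∑' k, ‖x (k + N)‖ * ‖y (k + N)‖ := by
        rw [tsum_mul_right, mul_comm]

lemma norm_apply_le (ω : Om H) : ∃ C : ℝ, 0 ≤ C ∧ ∀ T : B H, ‖ω.1 T‖ ≤ C * ‖T‖ := by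
  obtain ⟨x, y, hx, hy, hrep⟩ := ω.2
  refine ⟨∑' n, ‖x n‖ * ‖y n‖, tsum_nonneg fun n => by positivity, fun T => ?_⟩
  have h := tail_bound T hx hy hrep 0
  simp only [Finset.range_zero, Finset.sum_empty, sub_zero, Nat.add_zero] at h
  calc ‖ω.1 T‖ ≤ ‖T‖ * ∑' n, ‖x n‖ * ‖y n‖ := h
    _ = (∑' n, ‖x n‖ * ‖y n‖) * ‖T‖ := mul_comm _ _

/-- The candidate image of the ball of radius `R`. -/
def GoodSet (H : Type*) [NormedAddCommGroup H] [InnerProductSpace ℂ H] (R : ℝ) :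
    Set (Om H → ℂ) :=
  {f | (∀ x x' y : H, f (vfO (x + x') y) = f (vfO x y) + f (vfO x' y))
     ∧ (∀ (c : ℂ) (x y : H), f (vfO (c • x) y) = c * f (vfO x y))
     ∧ (∀ x y y' : H, f (vfO x (y + y')) = f (vfO x y) + f (vfO x y'))
     ∧ (∀ (c : ℂ) (x y : H), f (vfO x (c • y)) = (starRingEnd ℂ) c * f (vfO x y))
     ∧ (∀ x y : H, ‖f (vfO x y)‖ ≤ R * (‖x‖ * ‖y‖))
     ∧ (∀ (ω : Om H) (x y : ℕ → H), (Summable fun n => ‖x n‖ ^ 2) →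
         (Summable fun n => ‖y n‖ ^ 2) → (∀ T : B H, ω.1 T = ∑' n, ⟪y n, T (x n)⟫_ℂ) →
         ∀ N : ℕ, ‖f ω - ∑ n ∈ Finset.range N, f (vfO (x n) (y n))‖
           ≤ R * ∑' k, ‖x (k + N)‖ * ‖y (k + N)‖)}

lemma goodSet_closed (R : ℝ) : IsClosed (GoodSet H R) := by
  have hev : ∀ ω : Om H, Continuous fun f : Om H → ℂ => f ω := fun ω => continuous_apply ω
  unfold GoodSet
  simp only [Set.setOf_and]
  refine IsClosed.inter ?_ (IsClosed.inter ?_ (IsClosed.inter ?_ (IsClosed.inter ?_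
    (IsClosed.inter ?_ ?_))))
  · simp only [Set.setOf_forall]
    exact isClosed_iInter fun x => isClosed_iInter fun x' => isClosed_iInter fun y =>
      isClosed_eq (hev _) ((hev _).add (hev _))
  · simp only [Set.setOf_forall]
    exact isClosed_iInter fun c => isClosed_iInter fun x => isClosed_iInter fun y =>
      isClosed_eq (hev _) (continuous_const.mul (hev _))
  · simp only [Set.setOf_forall]
    exact isClosed_iInter fun x => isClosed_iInter fun y => isClosed_iInter fun y' =>
      isClosed_eq (hev _) ((hev _).add (hev _))
  · simp only [Set.setOf_forall]
    exact isClosed_iInter fun c => isClosed_iInter fun x => isClosed_iInter fun y =>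
      isClosed_eq (hev _) (continuous_const.mul (hev _))
  · simp only [Set.setOf_forall]
    exact isClosed_iInter fun x => isClosed_iInter fun y =>
      isClosed_le (hev _).norm continuous_const
  · simp only [Set.setOf_forall]
    refine isClosed_iInter fun ω => isClosed_iInter fun x => isClosed_iInter fun y =>
      isClosed_iInter fun _ => isClosed_iInter fun _ => isClosed_iInter fun _ =>
      isClosed_iInter fun N => isClosed_le ?_ continuous_const
    exact ((hev _).sub (continuous_finset_sum _ fun n _ => hev _)).norm

lemma F_mem_goodSet {R : ℝ} {T : B H} (hT : ‖T‖ ≤ R) : Fm T ∈ GoodSet H R := by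
  refine ⟨?_, ?_, ?_, ?_, ?_, ?_⟩
  · intro x x' y; simp [Fm, vfO, vf, inner_add_right]
  · intro c x y; simp [Fm, vfO, vf, inner_smul_right]
  · intro x y y'; simp [Fm, vfO, vf, inner_add_left]
  · intro c x y; simp [Fm, vfO, vf, inner_smul_left, mul_comm]
  · intro x y
    calc ‖Fm T (vfO x y)‖ = ‖⟪y, T x⟫_ℂ‖ := rfl
      _ ≤ ‖y‖ * ‖T x‖ := norm_inner_le_norm _ _
      _ ≤ ‖y‖ * (‖T‖ * ‖x‖) := by gcongr; exact T.le_opNorm _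
      _ = ‖T‖ * (‖x‖ * ‖y‖) := by ring
      _ ≤ R * (‖x‖ * ‖y‖) := by
          have : (0 : ℝ) ≤ ‖x‖ * ‖y‖ := by positivity
          exact mul_le_mul_of_nonneg_right hT this
  · intro ω x y hx hy hrep N
    have h1 := tail_bound T hx hy hrep N
    have h2 : (0 : ℝ) ≤ ∑' k, ‖x (k + N)‖ * ‖y (k + N)‖ := tsum_nonneg fun k => by positivity
    have h3 : ∀ n, Fm T (vfO (x n) (y n)) = ⟪y n, T (x n)⟫_ℂ := fun n => rfl
    calc ‖Fm T ω - ∑ n ∈ Finset.range N, Fm T (vfO (x n) (y n))‖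
        = ‖ω.1 T - ∑ n ∈ Finset.range N, ⟪y n, T (x n)⟫_ℂ‖ := by
          simp only [h3]; rfl
      _ ≤ ‖T‖ * ∑' k, ‖x (k + N)‖ * ‖y (k + N)‖ := h1
      _ ≤ R * ∑' k, ‖x (k + N)‖ * ‖y (k + N)‖ := mul_le_mul_of_nonneg_right hT h2

variable [CompleteSpace H]

lemma goodSet_sub {R : ℝ} (hR : 0 ≤ R) {f : Om H → ℂ} (hf : f ∈ GoodSet H R) :
    ∃ T : B H, ‖T‖ ≤ R ∧ Fm T = f := by
  obtain ⟨h1, h2, h3, h4, h5, h6⟩ := hf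
  -- the conjugate-linear-in-`y` functional, conjugated to be linear
  let φ : H → (H →L[ℂ] ℂ) := fun x =>
    LinearMap.mkContinuous
      { toFun := fun y => (starRingEnd ℂ) (f (vfO x y))
        map_add' := fun y y' => by
          show (starRingEnd ℂ) (f (vfO x (y + y')))
            = (starRingEnd ℂ) (f (vfO x y)) + (starRingEnd ℂ) (f (vfO x y'))
          rw [h3, map_add]
        map_smul' := fun c y => by
          show (starRingEnd ℂ) (f (vfO x (c • y)))
            = (RingHom.id ℂ) c • (starRingEnd ℂ) (f (vfO x y))
          rw [h4, map_mul]
          simp [smul_eq_mul] }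
      (R * ‖x‖)
      (fun y => by
        show ‖(starRingEnd ℂ) (f (vfO x y))‖ ≤ R * ‖x‖ * ‖y‖
        rw [RCLike.norm_conj]
        calc ‖f (vfO x y)‖ ≤ R * (‖x‖ * ‖y‖) := h5 x y
          _ = R * ‖x‖ * ‖y‖ := by ring)
  have hφ_apply : ∀ x y : H, φ x y = (starRingEnd ℂ) (f (vfO x y)) := fun x y => rfl
  have hφ_norm : ∀ x : H, ‖φ x‖ ≤ R * ‖x‖ := fun x =>
    LinearMap.mkContinuous_norm_le _ (by positivity) _
  have hφ_add : ∀ x x' : H, φ (x + x') = φ x + φ x' := by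
    intro x x'
    ext y
    simp only [ContinuousLinearMap.add_apply, hφ_apply, h1, map_add]
  have hφ_smul : ∀ (c : ℂ) (x : H), φ (c • x) = (starRingEnd ℂ) c • φ x := by
    intro c x
    ext y
    simp only [ContinuousLinearMap.smul_apply, hφ_apply, h2, map_mul, smul_eq_mul]
  let Tlin : H →ₗ[ℂ] H :=
    { toFun := fun x => (InnerProductSpace.toDual ℂ H).symm (φ x)
      map_add' := fun x x' => by simp only [hφ_add, map_add]
      map_smul' := fun c x => by
        simp only [hφ_smul, map_smulₛₗ, RingHom.id_apply]
        congr 1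
        simp }
  have hTinner : ∀ x y : H, ⟪y, Tlin x⟫_ℂ = f (vfO x y) := by
    intro x y
    have h := InnerProductSpace.toDual_symm_apply (𝕜 := ℂ) (E := H) (x := y) (y := φ x)
    have h' : ⟪Tlin x, y⟫_ℂ = (starRingEnd ℂ) (f (vfO x y)) := h
    rw [← inner_conj_symm, h']
    exact Complex.conj_conj _
  have hTnorm : ∀ x : H, ‖Tlin x‖ ≤ R * ‖x‖ := by
    intro x
    have : ‖Tlin x‖ = ‖φ x‖ := (InnerProductSpace.toDual ℂ H).symm.norm_map (φ x)
    rw [this]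
    exact hφ_norm x
  let T : B H := Tlin.mkContinuous R hTnorm
  have hT_apply : ∀ x : H, T x = Tlin x := fun x => rfl
  refine ⟨T, LinearMap.mkContinuous_norm_le _ hR _, ?_⟩
  funext ω
  obtain ⟨x, y, hx, hy, hrep⟩ := ω.2
  have hsum := summable_inner T hx hy
  have hlim1 : Tendsto (fun N => ∑ n ∈ Finset.range N, ⟪y n, T (x n)⟫_ℂ) atTop (𝓝 (ω.1 T)) := by
    rw [hrep T]
    exact hsum.hasSum.tendsto_sum_nat
  have hFm : ∀ n, f (vfO (x n) (y n)) = ⟪y n, T (x n)⟫_ℂ := fun n => (hTinner (x n) (y n)).symm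
  have hkey : ∀ N, ‖f ω - ∑ n ∈ Finset.range N, ⟪y n, T (x n)⟫_ℂ‖
      ≤ R * ∑' k, ‖x (k + N)‖ * ‖y (k + N)‖ := by
    intro N
    have := h6 ω x y hx hy hrep N
    simpa only [hFm] using this
  have ht : Tendsto (fun N => R * ∑' k, ‖x (k + N)‖ * ‖y (k + N)‖) atTop (𝓝 0) := by
    have := (tendsto_sum_nat_add (fun n => ‖x n‖ * ‖y n‖)).const_mul R
    simpa using this
  have hlim2 : Tendsto (fun N => ∑ n ∈ Finset.range N, ⟪y n, T (x n)⟫_ℂ) atTop (𝓝 (f ω)) := by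
    rw [tendsto_iff_norm_sub_tendsto_zero]
    refine squeeze_zero (fun N => norm_nonneg _) (fun N => ?_) ht
    rw [norm_sub_rev]
    exact hkey N
  exact tendsto_nhds_unique hlim1 hlim2

lemma ball_wcompact {R : ℝ} (hR : 0 ≤ R) :
    @IsCompact (B H) (weakStarTopology H) (Metric.closedBall 0 R) := by
  letI := weakStarTopology H
  have hemb : IsEmbedding (Fm (H := H)) := ⟨F_inducing, F_inj⟩
  rw [hemb.isCompact_iff]
  have himage : Fm '' Metric.closedBall (0 : B H) R = GoodSet H R := by
    ext f
    constructor
    · rintro ⟨T, hT, rfl⟩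
      refine F_mem_goodSet ?_
      simpa [dist_zero_right] using hT
    · intro hf
      obtain ⟨T, hT, rfl⟩ := goodSet_sub hR hf
      exact ⟨T, by simpa [dist_zero_right] using hT, rfl⟩
  rw [himage]
  choose C hC0 hC using fun ω : Om H => norm_apply_le ω
  have hsub : GoodSet H R ⊆ Set.pi Set.univ fun ω => Metric.closedBall (0 : ℂ) (C ω * R) := by
    rw [← himage]
    rintro _ ⟨T, hT, rfl⟩ ω -
    have hTn : ‖T‖ ≤ R := by simpa [dist_zero_right] using hT
    simp only [Metric.mem_closedBall, dist_zero_right]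
    calc ‖Fm T ω‖ = ‖ω.1 T‖ := rfl
      _ ≤ C ω * ‖T‖ := hC ω T
      _ ≤ C ω * R := mul_le_mul_of_nonneg_left hTn (hC0 ω)
  exact IsCompact.of_isClosed_subset
    (isCompact_univ_pi fun ω => isCompact_closedBall _ _) (goodSet_closed R) hsub

lemma norm_le_of_wclosure {S : Set (B H)} {W a : B H} {c : ℝ} (hc : 0 ≤ c)
    (ha : a ∈ @closure _ (weakStarTopology H) S) (hS : ∀ s ∈ S, ‖W - s‖ ≤ c) :
    ‖W - a‖ ≤ c := by
  letI := weakStarTopology H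
  refine ContinuousLinearMap.opNorm_le_bound _ hc fun ξ => ?_
  set v : H := (W - a) ξ with hv
  have hvv : ‖v‖ ^ 2 ≤ c * ‖ξ‖ * ‖v‖ := by
    set g : B H → ℂ := fun X => ⟪v, W ξ⟫_ℂ - Fm X (vfO ξ v) with hg
    have hgc : Continuous g := continuous_const.sub
      ((continuous_apply (vfO ξ v)).comp F_inducing.continuous)
    have hmem : g a ∈ closure (g '' S) :=
      (image_closure_subset_closure_image hgc) ⟨a, ha, rfl⟩
    have himg : g '' S ⊆ Metric.closedBall (0 : ℂ) (c * ‖ξ‖ * ‖v‖) := by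
      rintro _ ⟨s, hs, rfl⟩
      simp only [Metric.mem_closedBall, dist_zero_right]
      have hgs : g s = ⟪v, (W - s) ξ⟫_ℂ := by
        simp [hg, Fm, vfO, vf, ContinuousLinearMap.sub_apply, inner_sub_right]
      rw [hgs]
      calc ‖⟪v, (W - s) ξ⟫_ℂ‖ ≤ ‖v‖ * ‖(W - s) ξ‖ := norm_inner_le_norm _ _
        _ ≤ ‖v‖ * (‖W - s‖ * ‖ξ‖) := by gcongr; exact (W - s).le_opNorm ξ
        _ ≤ ‖v‖ * (c * ‖ξ‖) := by
            have h := hS s hs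
            exact mul_le_mul_of_nonneg_left
              (mul_le_mul_of_nonneg_right h (norm_nonneg _)) (norm_nonneg _)
        _ = c * ‖ξ‖ * ‖v‖ := by ring
    have hga : g a ∈ Metric.closedBall (0 : ℂ) (c * ‖ξ‖ * ‖v‖) :=
      closure_minimal himg Metric.isClosed_closedBall hmem
    have hgav : g a = ⟪v, v⟫_ℂ := by
      show ⟪v, W ξ⟫_ℂ - ⟪v, a ξ⟫_ℂ = ⟪v, v⟫_ℂ
      rw [← inner_sub_right, hv, ContinuousLinearMap.sub_apply]
    have : ‖g a‖ = ‖v‖ ^ 2 := by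
      rw [hgav, inner_self_eq_norm_sq_to_K]
      rw [norm_pow]
      simp
    rw [← this]
    simpa [dist_zero_right] using hga
  have hvn : (0:ℝ) ≤ ‖v‖ := norm_nonneg _
  rcases eq_or_lt_of_le hvn with h0 | h0
  · rw [← h0] at hvv ⊢
    positivity
  · have : ‖v‖ * ‖v‖ ≤ (c * ‖ξ‖) * ‖v‖ := by nlinarith
    exact le_of_mul_le_mul_right this h0

lemma exists_weak_limit (T : B H) {c : ℝ} (hc : 0 ≤ c) (V : ℕ → Set (B H))
    (hVcl : ∀ m, WStarClosed H (V m)) (Z : ℕ → B H)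
    (hZ : ∀ m n, m ≤ n → Z n ∈ V m) (hZd : ∀ n, ‖T - Z n‖ ≤ c) :
    ∃ a : B H, (∀ m, a ∈ V m) ∧ ‖T - a‖ ≤ c := by
  letI := weakStarTopology H
  have hball : ∀ n, Z n ∈ Metric.closedBall (0 : B H) (‖T‖ + c) := fun n => by
    simp only [Metric.mem_closedBall, dist_zero_right]
    have h1 : ‖Z n‖ - ‖T‖ ≤ ‖Z n - T‖ := norm_sub_norm_le _ _
    have h2 : ‖Z n - T‖ = ‖T - Z n‖ := norm_sub_rev _ _
    have h3 := hZd n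
    linarith
  have hcomp := ball_wcompact (H := H) (R := ‖T‖ + c) (by positivity)
  haveI : (Filter.map Z Filter.atTop).NeBot := by exact Filter.map_neBot
  obtain ⟨a, -, hclus⟩ := hcomp.exists_clusterPt (f := Filter.map Z Filter.atTop)
    (Filter.le_principal_iff.2 (Filter.mem_map.2 (Filter.Eventually.of_forall hball)))
  have hmemV : ∀ m, a ∈ V m := by
    intro m
    have h1 : Filter.map Z Filter.atTop ≤ Filter.principal (V m) :=
      Filter.le_principal_iff.2 (Filter.mem_map.2 (Filter.eventually_atTop.2
        ⟨m, fun n hn => hZ m n hn⟩))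
    exact (hVcl m).closure_subset (mem_closure_iff_clusterPt.2 (hclus.mono h1))
  refine ⟨a, hmemV, ?_⟩
  have haS : a ∈ closure (Set.range Z) := by
    have h1 : Filter.map Z Filter.atTop ≤ Filter.principal (Set.range Z) :=
      Filter.le_principal_iff.2 (Filter.mem_map.2 (Filter.Eventually.of_forall
        fun n => ⟨n, rfl⟩))
    exact mem_closure_iff_clusterPt.2 (hclus.mono h1)
  exact norm_le_of_wclosure hc haS (by rintro s ⟨n, rfl⟩; exact hZd n)

lemma arveson_nonneg (T : B H) (X : Set (B H)) : 0 ≤ arveson T X :=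
  Real.iSup_nonneg fun ξ => Real.iInf_nonneg fun S => norm_nonneg _

lemma arveson_mono (T : B H) {X Y : Set (B H)} (hXY : X ⊆ Y) (hX : X.Nonempty) :
    arveson T Y ≤ arveson T X := by
  obtain ⟨X₀, hX₀⟩ := hX
  haveI hne : Nonempty X := ⟨⟨X₀, hX₀⟩⟩
  have hbdd : BddAbove (Set.range fun ξ : {ξ : H // ‖ξ‖ = 1} => ⨅ S : X, ‖T ξ.1 - S.1 ξ.1‖) := by
    refine ⟨‖T - X₀‖, ?_⟩
    rintro _ ⟨ξ, rfl⟩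
    refine ciInf_le_of_le ⟨0, by rintro _ ⟨S, rfl⟩; exact norm_nonneg _⟩ ⟨X₀, hX₀⟩ ?_
    calc ‖T ξ.1 - X₀ ξ.1‖ = ‖(T - X₀) ξ.1‖ := by rw [ContinuousLinearMap.sub_apply]
      _ ≤ ‖T - X₀‖ * ‖ξ.1‖ := (T - X₀).le_opNorm ξ.1
      _ = ‖T - X₀‖ := by rw [ξ.2, mul_one]
  refine Real.iSup_le (fun ξ => ?_) (arveson_nonneg T X)
  have h1 : (⨅ S : Y, ‖T ξ.1 - S.1 ξ.1‖) ≤ ⨅ S : X, ‖T ξ.1 - S.1 ξ.1‖ :=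
    le_ciInf fun S => ciInf_le (f := fun S : Y => ‖T ξ.1 - S.1 ξ.1‖) ⟨0, by rintro _ ⟨S', rfl⟩; exact norm_nonneg _⟩ ⟨S.1, hXY S.2⟩
  exact h1.trans (le_ciSup hbdd ξ)

lemma hyperConst_nonneg {X : Set (B H)} (hX : Hyperreflexive X) : 0 ≤ hyperConst X :=
  le_csInf hX fun k hk => hk.1.le

end Stmt11Aux


/-- a decreasing sequence of weak* closed hyperreflexive subspaces
with uniformly bounded hyperreflexivity constants has hyperreflexive
intersection `U`, with `k(U) ≤ limsupₙ k(Uₙ)`. -/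
theorem stmt11 {H : Type*} [NormedAddCommGroup H] [InnerProductSpace ℂ H] [CompleteSpace H]
    [TopologicalSpace.SeparableSpace H]
    (U : ℕ → Submodule ℂ (B H))
    (hcl : ∀ n, WStarClosed H (U n : Set (B H)))
    (hhr : ∀ n, Hyperreflexive (U n : Set (B H)))
    (hdec : ∀ n, U (n + 1) ≤ U n)
    (hbdd : BddAbove (Set.range fun n => hyperConst (U n : Set (B H)))) :
    Hyperreflexive (⋂ n, (U n : Set (B H))) ∧
    hyperConst (⋂ n, (U n : Set (B H))) ≤
      Filter.limsup (fun n => hyperConst (U n : Set (B H))) Filter.atTop := by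
  classical
  set L := Filter.limsup (fun n => hyperConst (U n : Set (B H))) Filter.atTop with hLdef
  have hAnti : Antitone U := antitone_nat_of_succ_le hdec
  have hibdd : Filter.IsBoundedUnder (· ≤ ·) Filter.atTop
      (fun n => hyperConst (U n : Set (B H))) := by
    obtain ⟨b, hb⟩ := hbdd
    exact Filter.isBoundedUnder_of ⟨b, fun n => hb ⟨n, rfl⟩⟩
  have hL0 : 0 ≤ L :=
    Filter.le_limsup_of_frequently_le
      (Filter.Frequently.of_forall fun n => Stmt11Aux.hyperConst_nonneg (hhr n)) hibdd
  have key : ∀ k : ℝ, L < k → k ∈ hyperSet (⋂ n, (U n : Set (B H))) := by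
    intro k hk
    have hk0 : 0 < k := lt_of_le_of_lt hL0 hk
    refine ⟨hk0, fun T => ?_⟩
    set I : Set (B H) := ⋂ n, (U n : Set (B H)) with hIdef
    have hIne : I.Nonempty := ⟨0, Set.mem_iInter.2 fun n => (U n).zero_mem⟩
    set α := arveson T I with hαdef
    have hα0 : 0 ≤ α := Stmt11Aux.arveson_nonneg T I
    refine le_of_forall_pos_le_add fun ε hε => ?_
    have hev : ∀ᶠ n in Filter.atTop, hyperConst (U n : Set (B H)) < k :=
      Filter.eventually_lt_of_limsup_lt hk hibdd
    obtain ⟨N, hN⟩ := Filter.eventually_atTop.1 hev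
    have hex : ∀ n : ℕ, ∃ X ∈ (U (n + N) : Set (B H)), ‖T - X‖ ≤ k * α + ε := by
      intro n
      have h1 : hyperConst (U (n + N) : Set (B H)) < k := hN (n + N) (Nat.le_add_left N n)
      obtain ⟨k', hk'mem, hk'lt⟩ := exists_lt_of_csInf_lt (hhr (n + N)) h1
      have h2 : Metric.infDist T (U (n + N) : Set (B H))
          ≤ k' * arveson T (U (n + N) : Set (B H)) := hk'mem.2 T
      have h3 : arveson T (U (n + N) : Set (B H)) ≤ α :=
        Stmt11Aux.arveson_mono T (Set.iInter_subset _ (n + N)) hIne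
      have hαn : 0 ≤ arveson T (U (n + N) : Set (B H)) :=
        Stmt11Aux.arveson_nonneg T _
      have h4 : Metric.infDist T (U (n + N) : Set (B H)) < k * α + ε := by
        have hk'0 : 0 < k' := hk'mem.1
        nlinarith
      obtain ⟨X, hXmem, hXd⟩ :=
        (Metric.infDist_lt_iff ⟨0, (U (n + N)).zero_mem⟩).1 h4
      exact ⟨X, hXmem, by rw [← dist_eq_norm]; exact hXd.le⟩
    choose Z hZmem hZd using hex
    have hcpos : (0 : ℝ) ≤ k * α + ε := by nlinarith
    obtain ⟨a, haU, had⟩ := Stmt11Aux.exists_weak_limit T hcpos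
      (fun m => (U m : Set (B H))) hcl Z
      (fun m n hmn => hAnti (le_trans hmn (Nat.le_add_right n N)) (hZmem n)) hZd
    have haI : a ∈ I := Set.mem_iInter.2 haU
    calc Metric.infDist T I ≤ dist T a := Metric.infDist_le_dist_of_mem haI
      _ = ‖T - a‖ := dist_eq_norm T a
      _ ≤ k * α + ε := had
  refine ⟨⟨L + 1, key (L + 1) (by linarith)⟩, ?_⟩
  have hsub : Set.Ioi L ⊆ hyperSet (⋂ n, (U n : Set (B H))) := fun k hk => key k hk
  have hbb : BddBelow (hyperSet (⋂ n, (U n : Set (B H)))) := ⟨0, fun k hk => hk.1.le⟩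
  calc hyperConst (⋂ n, (U n : Set (B H)))
      = sInf (hyperSet (⋂ n, (U n : Set (B H)))) := rfl
    _ ≤ sInf (Set.Ioi L) := csInf_le_csInf hbb Set.nonempty_Ioi hsub
    _ = L := csInf_Ioi
end
end

section
/- Let U ⊆ B(H) be a hyperreflexive weak* closed masa-bimodule and Φ ∈ 𝔉H. Then the intersection U ∩ ran Φ is hyperreflexive and k(U ∩ ran Φ) ≤ λ(Φ) + ‖Φ‖·k(U). -/
open scoped InnerProductSpace Pointwise

noncomputable section

namespace SchurHyper

variable (H : Type*) [NormedAddCommGroup H] [InnerProductSpace ℂ H]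

variable {H}
variable [CompleteSpace H]

-- ===== auxiliary lemmas =====
section Aux

variable {H : Type*} [NormedAddCommGroup H] [InnerProductSpace ℂ H]

/-- A normal functional is norm-continuous. -/
lemma IsNormalFunctional.continuous {ω : B H →ₗ[ℂ] ℂ} (h : IsNormalFunctional H ω) :
    Continuous ω := by
  obtain ⟨x, y, hx, hy, hω⟩ := h
  have hxy : Summable fun n => ‖x n‖ * ‖y n‖ := by
    refine Summable.of_nonneg_of_le (fun n => by positivity)
      (fun n => ?_) ((hx.add hy).div_const 2)
    have := two_mul_le_add_sq (‖x n‖) (‖y n‖)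
    nlinarith [norm_nonneg (x n), norm_nonneg (y n)]
  refine AddMonoidHomClass.continuous_of_bound ω (∑' n, ‖x n‖ * ‖y n‖) fun T => ?_
  have hb : ∀ n, ‖(⟪y n, T (x n)⟫_ℂ)‖ ≤ ‖x n‖ * ‖y n‖ * ‖T‖ := by
    intro n
    calc ‖(⟪y n, T (x n)⟫_ℂ)‖ ≤ ‖y n‖ * ‖T (x n)‖ := norm_inner_le_norm _ _
      _ ≤ ‖y n‖ * (‖T‖ * ‖x n‖) := by
          exact mul_le_mul_of_nonneg_left (T.le_opNorm _) (norm_nonneg _)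
      _ = ‖x n‖ * ‖y n‖ * ‖T‖ := by ring
  have hs : Summable fun n => ‖(⟪y n, T (x n)⟫_ℂ)‖ :=
    Summable.of_nonneg_of_le (fun n => norm_nonneg _) hb (hxy.mul_right ‖T‖)
  calc ‖ω T‖ = ‖∑' n, ⟪y n, T (x n)⟫_ℂ‖ := by rw [hω]
    _ ≤ ∑' n, ‖(⟪y n, T (x n)⟫_ℂ)‖ := norm_tsum_le_tsum_norm hs
    _ ≤ ∑' n, ‖x n‖ * ‖y n‖ * ‖T‖ := Summable.tsum_le_tsum hb hs (hxy.mul_right ‖T‖)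
    _ = (∑' n, ‖x n‖ * ‖y n‖) * ‖T‖ := tsum_mul_right

/-- Weak* closed sets are norm closed. -/
lemma WStarClosed.isClosed {X : Set (B H)} (h : WStarClosed H X) : IsClosed X := by
  have hcont : @Continuous (B H) (B H) _ (weakStarTopology H) id := by
    rw [weakStarTopology]
    apply continuous_induced_rng.2
    exact continuous_pi fun ω => ω.2.continuous
  have := @IsClosed.preimage (B H) (B H) _ (weakStarTopology H) id hcont _ h
  simpa using this

end Aux

section Aux2

variable {H : Type*} [NormedAddCommGroup H] [InnerProductSpace ℂ H] [CompleteSpace H]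

/-- The orthogonal projection onto a closed `D`-invariant subspace belongs to the masa `D`. -/
lemma proj_mem_masa {D : StarSubalgebra ℂ (B H)} (hD : IsMasa D)
    (V : Submodule ℂ H) (hVc : IsClosed (V : Set H))
    (hinv : ∀ A ∈ D, ∀ x ∈ V, A x ∈ V) :
    ∃ Q : B H, Q ∈ D ∧ (∀ v ∈ V, Q v = v) ∧ (∀ x : H, Q x ∈ V) := by
  letI : CompleteSpace V := hVc.completeSpace_coe
  set Q : B H := V.subtypeL.comp (V.orthogonalProjectionOnto) with hQ
  have hQmem : ∀ x : H, Q x ∈ V := fun x => (V.orthogonalProjectionOnto x).2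
  have hQfix : ∀ v ∈ V, Q v = v := fun v hv => by
    exact (Submodule.starProjection_eq_self_iff (K := V)).mpr hv
  have hQorth : ∀ w ∈ Vᗮ, Q w = 0 := fun w hw => by
    simp [hQ, Submodule.orthogonalProjectionOnto_apply_of_mem_orthogonal hw]
  refine ⟨Q, hD.2 Q fun A hA => ?_, hQfix, hQmem⟩
  ext x
  have hx : x - Q x ∈ Vᗮ := Submodule.sub_starProjection_mem_orthogonal x
  have hAw : A (x - Q x) ∈ Vᗮ := by
    rw [Submodule.mem_orthogonal]
    intro u hu
    rw [← ContinuousLinearMap.adjoint_inner_left]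
    refine (Submodule.mem_orthogonal V _).1 hx _ (hinv _ ?_ u hu)
    rw [← ContinuousLinearMap.star_eq_adjoint]
    exact star_mem hA
  have h1 : Q (A x) = Q (A (Q x)) + Q (A (x - Q x)) := by
    rw [← map_add, ← map_add, add_sub_cancel]
  have h2 : Q (A (Q x)) = A (Q x) := hQfix _ (hinv A hA _ (hQmem x))
  have h3 : Q (A (x - Q x)) = 0 := hQorth _ hAw
  simp only [ContinuousLinearMap.mul_apply]
  rw [h1, h2, h3, add_zero]

/-- Evaluation at a vector, as a linear map `B H →ₗ[ℂ] H`. -/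
def evalAt (ξ : H) : B H →ₗ[ℂ] H where
  toFun S := S ξ
  map_add' _ _ := rfl
  map_smul' _ _ := rfl

lemma mem_closure_image_of_mem_tc {ξ : H} {M : Submodule ℂ (B H)} {x : H}
    (hx : x ∈ (M.map (evalAt ξ)).topologicalClosure) :
    x ∈ closure ((M.map (evalAt ξ) : Submodule ℂ H) : Set H) := by
  have := Submodule.topologicalClosure_coe (M.map (evalAt ξ))
  rw [← this]; exact hx

/-- Key locality lemma: for a masa-bimodule map `Φ`, a `D`-bimodule `U`, `T ∈ U`
and any vector `ξ`, the vector `Φ T ξ` lies in the closure of `U ξ`. -/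
lemma key_ptwise {D : StarSubalgebra ℂ (B H)} (hD : IsMasa D)
    {U : Submodule ℂ (B H)} (hUbim : IsBimodule D U)
    {Φ : B H →L[ℂ] B H} (hbim : ∀ A ∈ D, ∀ C ∈ D, ∀ T : B H, Φ (A * T * C) = A * Φ T * C)
    {T : B H} (hT : T ∈ U) (ξ : H) :
    Φ T ξ ∈ closure ((fun S : B H => S ξ) '' U) := by
  set V : Submodule ℂ H := (U.map (evalAt ξ)).topologicalClosure with hV
  have hVc : IsClosed (V : Set H) := Submodule.isClosed_topologicalClosure _
  have hVinv : ∀ A ∈ D, ∀ x ∈ V, A x ∈ V := by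
    intro A hA x hx
    have hsub : ⇑A '' ((U.map (evalAt ξ) : Submodule ℂ H) : Set H)
        ⊆ ((U.map (evalAt ξ) : Submodule ℂ H) : Set H) := by
      rintro _ ⟨_, ⟨S, hS, rfl⟩, rfl⟩
      refine ⟨A * S, ?_, rfl⟩
      have := hUbim A hA 1 (one_mem D) S hS
      rwa [mul_one] at this
    have h2 : A x ∈ closure ((U.map (evalAt ξ) : Submodule ℂ H) : Set H) :=
      closure_mono hsub
        (image_closure_subset_closure_image A.continuous
          ⟨x, mem_closure_image_of_mem_tc hx, rfl⟩)
    exact h2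
  set W : Submodule ℂ H :=
    ((Subalgebra.toSubmodule D.toSubalgebra).map (evalAt ξ)).topologicalClosure with hW
  have hWc : IsClosed (W : Set H) := Submodule.isClosed_topologicalClosure _
  have hWinv : ∀ A ∈ D, ∀ x ∈ W, A x ∈ W := by
    intro A hA x hx
    have hsub : ⇑A '' (((Subalgebra.toSubmodule D.toSubalgebra).map (evalAt ξ) : Submodule ℂ H) : Set H)
        ⊆ (((Subalgebra.toSubmodule D.toSubalgebra).map (evalAt ξ) : Submodule ℂ H) : Set H) := by
      rintro _ ⟨_, ⟨C, hC, rfl⟩, rfl⟩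
      refine ⟨A * C, (Subalgebra.mem_toSubmodule _).mpr ?_, rfl⟩
      exact mul_mem hA ((Subalgebra.mem_toSubmodule _).mp hC)
    have h2 : A x ∈ closure (((Subalgebra.toSubmodule D.toSubalgebra).map (evalAt ξ) : Submodule ℂ H) : Set H) :=
      closure_mono hsub
        (image_closure_subset_closure_image A.continuous
          ⟨x, mem_closure_image_of_mem_tc hx, rfl⟩)
    exact h2
  obtain ⟨Q, hQD, hQfix, hQmem⟩ := proj_mem_masa hD V hVc hVinv
  obtain ⟨E, hED, hEfix, hEmem⟩ := proj_mem_masa hD W hWc hWinv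
  have hξW : ξ ∈ W := by
    apply Submodule.le_topologicalClosure
    exact ⟨(1 : B H), (Subalgebra.mem_toSubmodule _).mpr (one_mem D.toSubalgebra), rfl⟩
  have hEξ : E ξ = ξ := hEfix ξ hξW
  -- `(1 - Q) * T` kills `W`
  have hg : ∀ w ∈ W, ((1 - Q) * T) w = 0 := by
    have hker : W ≤ LinearMap.ker (((1 - Q) * T : B H) : H →ₗ[ℂ] H) := by
      rw [hW]
      apply Submodule.topologicalClosure_minimal
      · rintro _ ⟨C, hC, rfl⟩
        have hTC : T * C ∈ U := by
          have := hUbim 1 (one_mem D) C hC T hT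
          rwa [one_mul] at this
        have hv : T ((evalAt ξ) C) ∈ V := by
          apply Submodule.le_topologicalClosure
          exact ⟨T * C, hTC, rfl⟩
        rw [LinearMap.mem_ker]
        show (1 - Q) (T ((evalAt ξ) C)) = 0
        rw [ContinuousLinearMap.sub_apply, ContinuousLinearMap.one_apply, hQfix _ hv, sub_self]
      · exact ContinuousLinearMap.isClosed_ker _
    intro w hw
    exact LinearMap.mem_ker.1 (hker hw)
  -- hence `(1 - Q) * T * E = 0`
  have hR : (1 - Q) * T * E = 0 := by
    ext x
    show ((1 - Q) * T) (E x) = 0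
    exact hg _ (hEmem x)
  have h0 : (1 - Q) * Φ T * E = 0 := by
    rw [← hbim (1 - Q) (sub_mem (one_mem D) hQD) E hED T, hR, map_zero]
  have h1 : (1 - Q) (Φ T (E ξ)) = 0 := by
    have := congrArg (fun S : B H => S ξ) h0
    simpa [ContinuousLinearMap.mul_apply] using this
  rw [hEξ, ContinuousLinearMap.sub_apply, ContinuousLinearMap.one_apply, sub_eq_zero] at h1
  have hmem : Φ T ξ ∈ V := by rw [h1]; exact hQmem _
  have : (V : Set H) = closure ((fun S : B H => S ξ) '' U) := by
    rw [hV, Submodule.topologicalClosure_coe, Submodule.map_coe]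
    rfl
  rw [← this]
  exact hmem

end Aux2

section Aux3

variable {H : Type*} [NormedAddCommGroup H] [InnerProductSpace ℂ H]

lemma arveson_nonneg (T : B H) (X : Set (B H)) : 0 ≤ arveson T X :=
  Real.iSup_nonneg fun _ => Real.iInf_nonneg fun _ => norm_nonneg _

lemma inner_bddBelow (T : B H) (ξ : {ξ : H // ‖ξ‖ = 1}) (X : Set (B H)) :
    BddBelow (Set.range fun S : X => ‖T ξ.1 - S.1 ξ.1‖) := by
  refine ⟨0, ?_⟩
  rintro _ ⟨S, rfl⟩
  exact norm_nonneg _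

lemma inner_le_opNorm (T : B H) (ξ : {ξ : H // ‖ξ‖ = 1}) {X : Set (B H)} (h0 : (0 : B H) ∈ X) :
    (⨅ S : X, ‖T ξ.1 - S.1 ξ.1‖) ≤ ‖T‖ := by
  refine le_trans (ciInf_le (inner_bddBelow T ξ X) ⟨0, h0⟩) ?_
  simp only [ContinuousLinearMap.zero_apply, sub_zero]
  calc ‖T ξ.1‖ ≤ ‖T‖ * ‖ξ.1‖ := T.le_opNorm _
    _ = ‖T‖ := by rw [ξ.2, mul_one]

lemma arveson_bddAbove (T : B H) {X : Set (B H)} (h0 : (0 : B H) ∈ X) :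
    BddAbove (Set.range fun ξ : {ξ : H // ‖ξ‖ = 1} => ⨅ S : X, ‖T ξ.1 - S.1 ξ.1‖) := by
  refine ⟨‖T‖, ?_⟩
  rintro _ ⟨ξ, rfl⟩
  exact inner_le_opNorm T ξ h0

lemma arveson_anti (T : B H) {X Y : Set (B H)} (hXY : X ⊆ Y) (h0 : (0 : B H) ∈ X) :
    arveson T Y ≤ arveson T X := by
  refine Real.iSup_le (fun ξ => ?_) (arveson_nonneg T X)
  haveI : Nonempty X := ⟨⟨0, h0⟩⟩
  have h1 : (⨅ S : Y, ‖T ξ.1 - S.1 ξ.1‖) ≤ ⨅ S : X, ‖T ξ.1 - S.1 ξ.1‖ :=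
    le_ciInf fun S => ciInf_le (inner_bddBelow T ξ Y) ⟨S.1, hXY S.2⟩
  exact le_trans h1 (le_ciSup (arveson_bddAbove T h0) ξ)

lemma arveson_le_opNorm_sub (T : B H) {X : Set (B H)} {R : B H} (hR : R ∈ X) :
    arveson T X ≤ ‖T - R‖ := by
  refine Real.iSup_le (fun ξ => ?_) (norm_nonneg _)
  refine le_trans (ciInf_le (inner_bddBelow T ξ X) ⟨R, hR⟩) ?_
  calc ‖T ξ.1 - R ξ.1‖ = ‖(T - R) ξ.1‖ := by rw [ContinuousLinearMap.sub_apply]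
    _ ≤ ‖T - R‖ * ‖ξ.1‖ := (T - R).le_opNorm _
    _ = ‖T - R‖ := by rw [ξ.2, mul_one]

lemma arveson_eq_zero (T : B H) {X : Set (B H)} (h0 : (0 : B H) ∈ X)
    (h : ∀ ξ : H, T ξ ∈ closure ((fun S : B H => S ξ) '' X)) : arveson T X = 0 := by
  refine le_antisymm (Real.iSup_le (fun ξ => ?_) le_rfl) (arveson_nonneg T X)
  refine le_of_forall_pos_le_add fun ε hε => ?_
  rw [zero_add]
  obtain ⟨v, ⟨S, hS, rfl⟩, hlt⟩ := Metric.mem_closure_iff.1 (h ξ.1) ε hε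
  refine le_trans (ciInf_le (inner_bddBelow T ξ X) ⟨S, hS⟩) ?_
  rw [← dist_eq_norm]
  exact le_of_lt hlt

variable [CompleteSpace H]

/-- Invariance: a masa-bimodule map maps a hyperreflexive norm-closed bimodule into itself. -/
lemma phi_maps_into {D : StarSubalgebra ℂ (B H)} (hD : IsMasa D)
    {U : Submodule ℂ (B H)} (hUbim : IsBimodule D U)
    (hUcl : IsClosed (U : Set (B H))) (hUhr : Hyperreflexive (U : Set (B H)))
    {Φ : B H →L[ℂ] B H} (hbim : ∀ A ∈ D, ∀ C ∈ D, ∀ T : B H, Φ (A * T * C) = A * Φ T * C)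
    {T : B H} (hT : T ∈ U) : Φ T ∈ U := by
  obtain ⟨k, hk0, hk⟩ := hUhr
  have hα : arveson (Φ T) (U : Set (B H)) = 0 :=
    arveson_eq_zero _ (zero_mem U) (key_ptwise hD hUbim hbim hT)
  have hd : Metric.infDist (Φ T) (U : Set (B H)) ≤ 0 := by
    have := hk (Φ T)
    rwa [hα, mul_zero] at this
  have hd0 : Metric.infDist (Φ T) (U : Set (B H)) = 0 :=
    le_antisymm hd (Metric.infDist_nonneg)
  exact (hUcl.mem_iff_infDist_zero ⟨0, zero_mem U⟩).2 hd0

end Aux3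

section Aux4

variable {H : Type*} [NormedAddCommGroup H] [InnerProductSpace ℂ H] [CompleteSpace H]

lemma mem_hyperSet_inter {D : StarSubalgebra ℂ (B H)} (hD : IsMasa D)
    {U : Submodule ℂ (B H)} (hUbim : IsBimodule D U)
    (hUcl : IsClosed (U : Set (B H))) (hUhr : Hyperreflexive (U : Set (B H)))
    {Φ : B H →L[ℂ] B H} (hΦ : MemFH D Φ)
    {l k : ℝ} (hl : l ∈ lamSet Φ) (hk : k ∈ hyperSet (U : Set (B H))) :
    l + ‖Φ‖ * k ∈ hyperSet ((U : Set (B H)) ∩ Set.range ⇑Φ) := by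
  have hbim : ∀ A ∈ D, ∀ C ∈ D, ∀ T : B H, Φ (A * T * C) = A * Φ T * C := hΦ.1.1.2
  set X : Set (B H) := (U : Set (B H)) ∩ Set.range ⇑Φ with hX
  have h0X : (0 : B H) ∈ X := ⟨zero_mem U, ⟨0, map_zero Φ⟩⟩
  refine ⟨by nlinarith [hl.1, hk.1, norm_nonneg Φ], fun T => ?_⟩
  have hαr : arveson T (Set.range ⇑Φ) ≤ arveson T X :=
    arveson_anti T Set.inter_subset_right h0X
  have hαU : arveson T (U : Set (B H)) ≤ arveson T X :=
    arveson_anti T Set.inter_subset_left h0X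
  have hαX : 0 ≤ arveson T X := arveson_nonneg T X
  -- step 1: d(T, X) ≤ d(ΦT, X) + ‖T - ΦT‖
  have step1 : Metric.infDist T X ≤ Metric.infDist (Φ T) X + ‖T - Φ T‖ := by
    have := Metric.infDist_le_infDist_add_dist (x := T) (y := Φ T) (s := X)
    rwa [dist_eq_norm] at this
  -- step 2: ‖T - ΦT‖ ≤ l * α(T, X)
  have step2 : ‖T - Φ T‖ ≤ l * arveson T X :=
    le_trans (hl.2 T) (mul_le_mul_of_nonneg_left hαr (le_of_lt hl.1))
  -- step 3: d(ΦT, X) ≤ ‖Φ‖ * d(T, U)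
  have step3 : Metric.infDist (Φ T) X ≤ ‖Φ‖ * Metric.infDist T (U : Set (B H)) := by
    have hUne : (U : Set (B H)).Nonempty := ⟨0, zero_mem U⟩
    refine le_of_forall_pos_le_add fun δ hδ => ?_
    have hε : (0 : ℝ) < δ / (‖Φ‖ + 1) := by positivity
    obtain ⟨S, hS, hdist⟩ := (Metric.infDist_lt_iff hUne).1
      (lt_add_of_pos_right (Metric.infDist T (U : Set (B H))) hε)
    have hΦS : Φ S ∈ X := ⟨phi_maps_into hD hUbim hUcl hUhr hbim hS, ⟨S, rfl⟩⟩
    have h1 : Metric.infDist (Φ T) X ≤ dist (Φ T) (Φ S) :=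
      Metric.infDist_le_dist_of_mem hΦS
    have h2 : dist (Φ T) (Φ S) ≤ ‖Φ‖ * dist T S := by
      rw [dist_eq_norm, dist_eq_norm, ← map_sub]
      exact Φ.le_opNorm _
    have h3 : ‖Φ‖ * dist T S ≤ ‖Φ‖ * (Metric.infDist T (U : Set (B H)) + δ / (‖Φ‖ + 1)) :=
      mul_le_mul_of_nonneg_left (le_of_lt hdist) (norm_nonneg Φ)
    have h4 : ‖Φ‖ * (δ / (‖Φ‖ + 1)) ≤ δ := by
      rw [mul_div_assoc'] at *
      rw [div_le_iff₀ (by positivity)]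
      nlinarith [norm_nonneg Φ]
    nlinarith [norm_nonneg Φ]
  -- step 4: d(T, U) ≤ k * α(T, X)
  have step4 : Metric.infDist T (U : Set (B H)) ≤ k * arveson T X :=
    le_trans (hk.2 T) (mul_le_mul_of_nonneg_left hαU (le_of_lt hk.1))
  have : ‖Φ‖ * Metric.infDist T (U : Set (B H)) ≤ ‖Φ‖ * (k * arveson T X) :=
    mul_le_mul_of_nonneg_left step4 (norm_nonneg Φ)
  calc Metric.infDist T X ≤ Metric.infDist (Φ T) X + ‖T - Φ T‖ := step1
    _ ≤ ‖Φ‖ * (k * arveson T X) + l * arveson T X := by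
        have := le_trans step3 this
        linarith
    _ = (l + ‖Φ‖ * k) * arveson T X := by ring

end Aux4

end SchurHyper

open SchurHyper

/-- if `U` is a hyperreflexive weak* closed masa-bimodule and
`Φ ∈ 𝔉H`, then `U ∩ ran Φ` is hyperreflexive and
`k(U ∩ ran Φ) ≤ λ(Φ) + ‖Φ‖·k(U)`. -/
theorem stmt14 {H : Type*} [NormedAddCommGroup H] [InnerProductSpace ℂ H] [CompleteSpace H]
    [TopologicalSpace.SeparableSpace H]
    (D : StarSubalgebra ℂ (B H)) (hD : IsMasa D)
    (U : Submodule ℂ (B H)) (hUbim : IsBimodule D U)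
    (hUcl : WStarClosed H (U : Set (B H))) (hUhr : Hyperreflexive (U : Set (B H)))
    (Φ : B H →L[ℂ] B H) (hΦ : MemFH D Φ) :
    Hyperreflexive ((U : Set (B H)) ∩ Set.range ⇑Φ) ∧
    hyperConst ((U : Set (B H)) ∩ Set.range ⇑Φ) ≤
      lam Φ + ‖Φ‖ * hyperConst (U : Set (B H)) := by
  have hUcl' : IsClosed (U : Set (B H)) := hUcl.isClosed
  obtain ⟨l0, hl0⟩ := hΦ.2
  obtain ⟨k0, hk0⟩ := id hUhr
  have hmem : ∀ l ∈ lamSet Φ, ∀ k ∈ hyperSet (U : Set (B H)),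
      l + ‖Φ‖ * k ∈ hyperSet ((U : Set (B H)) ∩ Set.range ⇑Φ) :=
    fun l hl k hk => mem_hyperSet_inter hD hUbim hUcl' hUhr hΦ hl hk
  have hbdd : BddBelow (hyperSet ((U : Set (B H)) ∩ Set.range ⇑Φ)) :=
    ⟨0, fun a ha => le_of_lt ha.1⟩
  refine ⟨⟨l0 + ‖Φ‖ * k0, hmem l0 hl0 k0 hk0⟩, ?_⟩
  have h1 : ∀ l ∈ lamSet Φ, ∀ k ∈ hyperSet (U : Set (B H)),
      hyperConst ((U : Set (B H)) ∩ Set.range ⇑Φ) ≤ l + ‖Φ‖ * k :=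
    fun l hl k hk => csInf_le hbdd (hmem l hl k hk)
  have h2 : ∀ l ∈ lamSet Φ,
      hyperConst ((U : Set (B H)) ∩ Set.range ⇑Φ) ≤ l + ‖Φ‖ * hyperConst (U : Set (B H)) := by
    intro l hl
    rcases eq_or_lt_of_le (norm_nonneg Φ) with hz | hpos
    · have := h1 l hl k0 hk0
      rw [← hz] at this ⊢
      simpa using this
    · have hK : (hyperConst ((U : Set (B H)) ∩ Set.range ⇑Φ) - l) / ‖Φ‖
          ≤ hyperConst (U : Set (B H)) := by
        refine le_csInf ⟨k0, hk0⟩ fun k hk => ?_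
        rw [div_le_iff₀ hpos]
        have := h1 l hl k hk
        have hcomm : ‖Φ‖ * k = k * ‖Φ‖ := mul_comm _ _
        linarith
      rw [div_le_iff₀ hpos] at hK
      have hcomm : hyperConst (U : Set (B H)) * ‖Φ‖ = ‖Φ‖ * hyperConst (U : Set (B H)) :=
        mul_comm _ _
      linarith
  have h3 : hyperConst ((U : Set (B H)) ∩ Set.range ⇑Φ)
      - ‖Φ‖ * hyperConst (U : Set (B H)) ≤ lam Φ :=
    le_csInf ⟨l0, hl0⟩ fun l hl => by linarith [h2 l hl]
  linarith
end
end
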